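/- Let d ≥ 2, α ∈ (0, 1), let D ⊂ ℝ^d be a bounded measurable set, and let ĉ > 0. Let p : (0, ∞) × D × D → [0, ∞) be a measurable function satisfying p(t, x, y) ≤ ĉ · min{ t^{−d/(2α)}, t · |x − y|^{−(d+2α)} } for all t > 0 and x, y ∈ D. Then for every q ∈ [1, (d+2α)/d) and every T > 0, sup_{x ∈ D} ∫₀^T ( ∫_D p(t, x, y)^q dy )^{1/q} dt < ∞. -/

import Mathlib

open MeasureTheory ENNReal NNReal

-- min is bounded by the geometric interpolation
lemma my_min_le_rpow {a b : ℝ≥0∞} {θ : ℝ} (h0 : 0 < θ) (h1 : θ < 1) :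
    min a b ≤ a ^ (1 - θ) * b ^ θ := by
  rcases eq_or_ne (min a b) 0 with h | h
  · rw [h]; exact zero_le
  rcases eq_or_ne (min a b) ⊤ with h2 | h2
  · obtain ⟨ha, hb⟩ := min_eq_top.mp h2
    rw [ha, hb, ENNReal.top_rpow_of_pos (by linarith), ENNReal.top_rpow_of_pos h0]
    simp
  calc min a b = (min a b) ^ (1 - θ) * (min a b) ^ θ := by
        rw [← ENNReal.rpow_add _ _ h h2]; norm_num
    _ ≤ a ^ (1 - θ) * b ^ θ :=
        mul_le_mul' (ENNReal.rpow_le_rpow (min_le_left _ _) (by linarith))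
          (ENNReal.rpow_le_rpow (min_le_right _ _) h0.le)

-- finiteness of the Riesz-type integral over a ball
lemma my_ball_lintegral (d : ℕ) (hd : 0 < d) {r R : ℝ} (hr0 : 0 ≤ r) (hrd : r < (d : ℝ))
    (hR : 0 < R) :
    ∫⁻ z in Metric.ball (0 : EuclideanSpace ℝ (Fin d)) R, ((‖z‖₊ : ℝ≥0∞)) ^ (-r) < ⊤ := by
  classical
  set E := EuclideanSpace ℝ (Fin d)
  have hdim : Module.finrank ℝ E = d := finrank_euclideanSpace_fin
  haveI : Nontrivial E := Module.nontrivial_of_finrank_pos (R := ℝ) (by omega : 0 < Module.finrank ℝ E)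
  set c : ℝ := (2 : ℝ)⁻¹ with hc
  have hc1 : c < 1 := by norm_num [hc]
  have hc0 : 0 < c := by norm_num [hc]
  set S : ℕ → Set E := fun n => {z : E | R * c ^ (n + 1) ≤ ‖z‖} ∩ Metric.ball 0 (R * c ^ n)
    with hS
  have hcover : Metric.ball (0 : E) R ⊆ {0} ∪ ⋃ n, S n := by
    intro z hz
    rcases eq_or_ne z 0 with h | h
    · exact Or.inl (by simp [h])
    right
    have hz0 : 0 < ‖z‖ := norm_pos_iff.2 h
    have hzR : ‖z‖ < R := by simpa using mem_ball_zero_iff.1 hz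
    have hex : ∃ n : ℕ, R * c ^ (n + 1) ≤ ‖z‖ := by
      obtain ⟨n, hn⟩ := exists_pow_lt_of_lt_one (div_pos hz0 hR) hc1
      refine ⟨n, ?_⟩
      have h1 : c ^ (n + 1) ≤ c ^ n := pow_le_pow_of_le_one hc0.le hc1.le (by omega)
      have h2 : R * c ^ n < ‖z‖ := by
        have := (mul_lt_mul_iff_right₀ hR).2 hn
        rwa [mul_div_cancel₀ _ hR.ne'] at this
      nlinarith
    set m := Nat.find hex with hm
    refine Set.mem_iUnion.2 ⟨m, Nat.find_spec hex, ?_⟩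
    rw [mem_ball_zero_iff]
    rcases Nat.eq_zero_or_pos m with hm0 | hm0
    · rw [hm0]; simpa using hzR
    · obtain ⟨k, hk⟩ := Nat.exists_eq_succ_of_ne_zero hm0.ne'
      have hmin := Nat.find_min hex (m := k) (by omega)
      push_neg at hmin
      rw [hk]
      exact hmin
  set V : ℝ≥0∞ := volume (Metric.ball (0 : E) 1) with hV
  have hVfin : V < ⊤ := measure_ball_lt_top
  set K : ℝ≥0∞ := ENNReal.ofReal (R ^ ((d : ℝ) - r) * 2 ^ r) with hK
  set x : ℝ≥0∞ := ENNReal.ofReal ((2 : ℝ) ^ (r - (d : ℝ))) with hx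
  have hx1 : x < 1 := by
    rw [hx, ENNReal.ofReal_lt_one]
    exact Real.rpow_lt_one_of_one_lt_of_neg one_lt_two (by linarith)
  have hreal : ∀ n : ℕ, (R * c ^ (n + 1)) ^ (-r) * (R * c ^ n) ^ d
      = (R ^ ((d : ℝ) - r) * 2 ^ r) * ((2 : ℝ) ^ (r - (d : ℝ))) ^ n := by
    intro n
    have hlc : Real.log c = -Real.log 2 := by rw [hc, Real.log_inv]
    have hpL : (0:ℝ) < (R * c ^ (n + 1)) ^ (-r) * (R * c ^ n) ^ d := by positivity
    have hpR : (0:ℝ) < (R ^ ((d : ℝ) - r) * 2 ^ r) * ((2 : ℝ) ^ (r - (d : ℝ))) ^ n := by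
      positivity
    apply Real.log_injOn_pos (Set.mem_Ioi.2 hpL) (Set.mem_Ioi.2 hpR)
    have e1 : Real.log ((R * c ^ (n + 1)) ^ (-r)) = (-r) * (Real.log R + ((n:ℝ)+1) * Real.log c) := by
      rw [Real.log_rpow (by positivity), Real.log_mul hR.ne' (by positivity), Real.log_pow]
      push_cast; ring
    have e2 : Real.log ((R * c ^ n) ^ d) = (d:ℝ) * (Real.log R + (n:ℝ) * Real.log c) := by
      rw [Real.log_pow, Real.log_mul hR.ne' (by positivity), Real.log_pow]
    have e3 : Real.log ((R ^ ((d : ℝ) - r) * 2 ^ r) * ((2 : ℝ) ^ (r - (d : ℝ))) ^ n)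
        = ((d:ℝ) - r) * Real.log R + r * Real.log 2 + (n:ℝ) * ((r - (d:ℝ)) * Real.log 2) := by
      rw [Real.log_mul (by positivity) (by positivity),
        Real.log_mul (by positivity) (by positivity), Real.log_rpow hR,
        Real.log_rpow (by norm_num : (0:ℝ) < 2), Real.log_pow,
        Real.log_rpow (by norm_num : (0:ℝ) < 2)]
    rw [Real.log_mul (by positivity) (by positivity), e1, e2, e3, hlc]
    ring
  have key : ∀ n : ℕ, (∫⁻ z in S n, ((‖z‖₊ : ℝ≥0∞)) ^ (-r)) ≤ (K * V) * x ^ n := by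
    intro n
    have hSmeas : MeasurableSet (S n) :=
      (isClosed_le continuous_const continuous_norm).measurableSet.inter measurableSet_ball
    have hb : ∀ z ∈ S n, ((‖z‖₊ : ℝ≥0∞)) ^ (-r) ≤ ENNReal.ofReal ((R * c ^ (n+1)) ^ (-r)) := by
      intro z hz
      have h1 : R * c ^ (n + 1) ≤ ‖z‖ := hz.1
      have hpos : (0:ℝ) < R * c ^ (n+1) := by positivity
      rw [← ENNReal.ofReal_rpow_of_pos hpos]
      rw [ENNReal.rpow_neg, ENNReal.rpow_neg, ENNReal.inv_le_inv]
      apply ENNReal.rpow_le_rpow _ hr0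
      rw [← ENNReal.ofReal_coe_nnreal, coe_nnnorm]
      exact ENNReal.ofReal_le_ofReal h1
    calc (∫⁻ z in S n, ((‖z‖₊ : ℝ≥0∞)) ^ (-r))
        ≤ ∫⁻ _ in S n, ENNReal.ofReal ((R * c ^ (n+1)) ^ (-r)) := setLIntegral_mono' hSmeas hb
      _ = ENNReal.ofReal ((R * c ^ (n+1)) ^ (-r)) * volume (S n) := setLIntegral_const _ _
      _ ≤ ENNReal.ofReal ((R * c ^ (n+1)) ^ (-r)) * volume (Metric.ball (0:E) (R * c ^ n)) :=
          mul_le_mul_right (measure_mono Set.inter_subset_right) _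
      _ = ENNReal.ofReal ((R * c ^ (n+1)) ^ (-r)) * (ENNReal.ofReal ((R * c ^ n) ^ d) * V) := by
          rw [Measure.addHaar_ball volume 0 (by positivity), hdim, hV]
      _ = (K * V) * x ^ n := by
          rw [← mul_assoc, ← ENNReal.ofReal_mul (by positivity), hreal n, hK, hx,
            ENNReal.ofReal_mul (by positivity), ← ENNReal.ofReal_pow (by positivity)]
          ring
  have htot : (∫⁻ z in Metric.ball (0 : E) R, ((‖z‖₊ : ℝ≥0∞)) ^ (-r))
      ≤ (K * V) * (1 - x)⁻¹ := by
    calc (∫⁻ z in Metric.ball (0 : E) R, ((‖z‖₊ : ℝ≥0∞)) ^ (-r))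
        ≤ ∫⁻ z in ({0} ∪ ⋃ n, S n), ((‖z‖₊ : ℝ≥0∞)) ^ (-r) := lintegral_mono_set hcover
      _ ≤ (∫⁻ z in ({0} : Set E), ((‖z‖₊ : ℝ≥0∞)) ^ (-r))
          + ∫⁻ z in ⋃ n, S n, ((‖z‖₊ : ℝ≥0∞)) ^ (-r) := lintegral_union_le _ _ _
      _ ≤ 0 + ∑' n, ∫⁻ z in S n, ((‖z‖₊ : ℝ≥0∞)) ^ (-r) := by
          gcongr
          · exact le_of_eq (setLIntegral_measure_zero _ _ (measure_singleton 0))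
          · exact lintegral_iUnion_le _ _
      _ ≤ ∑' n, (K * V) * x ^ n := by rw [zero_add]; exact ENNReal.tsum_le_tsum key
      _ = (K * V) * (1 - x)⁻¹ := by rw [ENNReal.tsum_mul_left, ENNReal.tsum_geometric]
  refine lt_of_le_of_lt htot ?_
  apply ENNReal.mul_lt_top (ENNReal.mul_lt_top ENNReal.ofReal_lt_top hVfin)
  rw [ENNReal.inv_lt_top]
  exact tsub_pos_of_lt hx1


set_option maxHeartbeats 1600000 in
/-- If a kernel `p` on `(0,∞) × D × D` satisfies the α-stable heat-kernel upper bound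
`p(t,x,y) ≤ ĉ min{t^{-d/(2α)}, t |x-y|^{-(d+2α)}}`, then for every `q ∈ [1, (d+2α)/d)` and
`T > 0`, the quantity `sup_{x ∈ D} ∫₀ᵀ ‖p(t,x,·)‖_{L^q(D)} dt` is finite. -/
theorem stmt_8 (d : ℕ) (hd : 2 ≤ d) (α : ℝ) (hα : α ∈ Set.Ioo (0:ℝ) 1)
    (D : Set (EuclideanSpace ℝ (Fin d))) (hD_meas : MeasurableSet D)
    (hD_bdd : Bornology.IsBounded D)
    (chat : ℝ) (hchat : 0 < chat)
    (p : ℝ → EuclideanSpace ℝ (Fin d) → EuclideanSpace ℝ (Fin d) → ℝ)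
    (hp_meas : Measurable
      (fun z : ℝ × EuclideanSpace ℝ (Fin d) × EuclideanSpace ℝ (Fin d) => p z.1 z.2.1 z.2.2))
    (hp_nonneg : ∀ t x y, 0 < t → x ∈ D → y ∈ D → 0 ≤ p t x y)
    (hp_bound : ∀ t x y, 0 < t → x ∈ D → y ∈ D →
      ENNReal.ofReal (p t x y) ≤ ENNReal.ofReal chat *
        min (ENNReal.ofReal t ^ (-(d:ℝ) / (2 * α)))
            (ENNReal.ofReal t * (‖x - y‖₊ : ℝ≥0∞) ^ (-((d:ℝ) + 2 * α)))) :
    ∀ q : ℝ, 1 ≤ q → q < ((d:ℝ) + 2 * α) / (d:ℝ) → ∀ T : ℝ, 0 < T →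
      (⨆ x ∈ D, ∫⁻ t in Set.Ioo (0:ℝ) T,
          (∫⁻ y in D, ENNReal.ofReal (p t x y) ^ q) ^ (1 / q)) < ⊤ := by
  intro q hq1 hq2 T hT
  obtain ⟨hα0, hα1⟩ := hα
  have hd2 : (2:ℝ) ≤ (d:ℝ) := by exact_mod_cast hd
  have hd0 : (0:ℝ) < (d:ℝ) := by linarith
  have hdpos : 0 < d := by omega
  have hA : (0:ℝ) < (d:ℝ) + 2*α := by linarith
  have hd2α : 2*α < (d:ℝ) := by linarith
  have hq0 : (0:ℝ) < q := by linarith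
  have hqd : q * (d:ℝ) < (d:ℝ) + 2*α := by
    have := (lt_div_iff₀ hd0).1 hq2
    linarith
  have hkey : q * ((d:ℝ) - 2*α) < (d:ℝ) := by nlinarith
  set A : ℝ := (d:ℝ) + 2*α with hA'
  set θ : ℝ := (((d:ℝ) - 2*α)*q + (d:ℝ)) / (2*q*A) with hθ
  have hnum : 0 < ((d:ℝ) - 2*α)*q + (d:ℝ) := by nlinarith
  have hden : 0 < 2*q*A := by positivity
  have hθ0 : 0 < θ := div_pos hnum hden
  have hθ1 : θ < 1 := by
    rw [hθ, div_lt_one hden, hA']; nlinarith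
  set s : ℝ := θ * A with hs
  set r : ℝ := s * q with hr
  have hrval : r = (((d:ℝ) - 2*α)*q + (d:ℝ)) / 2 := by
    rw [hr, hs, hθ]; field_simp
  have hr0 : 0 < r := by rw [hrval]; linarith
  have hrd : r < (d:ℝ) := by rw [hrval]; nlinarith
  set β : ℝ := θ - (1-θ)*((d:ℝ)/(2*α)) with hβ'
  have hθA : θ * A = (((d:ℝ)-2*α)*q + (d:ℝ))/(2*q) := by
    rw [hθ]; field_simp
  have h1 : (d:ℝ) - 2*α < θ * A := by
    rw [hθA, lt_div_iff₀ (by positivity : (0:ℝ) < 2*q)]; nlinarith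
  have hβ : -1 < β := by
    have h2 : (β + 1) * (2*α) = θ*((d:ℝ)+2*α) - ((d:ℝ) - 2*α) := by
      rw [hβ']; field_simp; ring
    rw [hA'] at h1
    nlinarith
  obtain ⟨R₀, hR₀⟩ := hD_bdd.subset_closedBall 0
  set ρ : ℝ := 2 * max R₀ 0 + 1 with hρ
  have hρ0 : 0 < ρ := by positivity
  have hsub : ∀ x ∈ D, D ⊆ Metric.ball x ρ := by
    intro x hx y hy
    have h1 : dist x 0 ≤ max R₀ 0 :=
      le_trans (Metric.mem_closedBall.1 (hR₀ hx)) (le_max_left _ _)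
    have h2 : dist y 0 ≤ max R₀ 0 :=
      le_trans (Metric.mem_closedBall.1 (hR₀ hy)) (le_max_left _ _)
    have h3 : dist y x ≤ dist y 0 + dist 0 x := dist_triangle _ _ _
    rw [dist_comm] at h1
    rw [Metric.mem_ball]
    rw [hρ]
    linarith
  set M : ℝ≥0∞ := ∫⁻ z in Metric.ball (0 : EuclideanSpace ℝ (Fin d)) ρ, ((‖z‖₊ : ℝ≥0∞)) ^ (-r) with hM'
  have hM : M < ⊤ := my_ball_lintegral d hdpos hr0.le hrd hρ0
  have hchange : ∀ x : EuclideanSpace ℝ (Fin d), (∫⁻ y in Metric.ball x ρ, ((‖x - y‖₊ : ℝ≥0∞)) ^ (-r)) = M := by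
    intro x
    have hmp : MeasurePreserving (fun y : EuclideanSpace ℝ (Fin d) => x - y) volume volume :=
      Measure.measurePreserving_sub_left volume x
    have hemb : MeasurableEmbedding (fun y : EuclideanSpace ℝ (Fin d) => x - y) :=
      (Homeomorph.subLeft x).measurableEmbedding
    have hpre : (fun y : EuclideanSpace ℝ (Fin d) => x - y) ⁻¹' (Metric.ball 0 ρ) = Metric.ball x ρ := by
      ext y
      simp only [Set.mem_preimage, Metric.mem_ball, dist_eq_norm, sub_zero]
      rw [norm_sub_rev]
    rw [hM', ← hmp.setLIntegral_comp_preimage_emb hemb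
      (fun z => ((‖z‖₊ : ℝ≥0∞)) ^ (-r)) (Metric.ball 0 ρ), hpre]
  have claim1 : ∀ x ∈ D, ∀ t ∈ Set.Ioo (0:ℝ) T,
      (∫⁻ y in D, ENNReal.ofReal (p t x y) ^ q) ^ (1/q)
        ≤ (ENNReal.ofReal chat * M ^ (1/q)) * ENNReal.ofReal t ^ β := by
    intro x hx t ht
    have ht0 : 0 < t := ht.1
    have htne0 : ENNReal.ofReal t ≠ 0 := (ENNReal.ofReal_pos.2 ht0).ne'
    have htnetop : ENNReal.ofReal t ≠ ⊤ := ENNReal.ofReal_ne_top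
    have hpt : ∀ y ∈ D, ENNReal.ofReal (p t x y)
        ≤ ENNReal.ofReal chat * (ENNReal.ofReal t ^ β * ((‖x - y‖₊ : ℝ≥0∞)) ^ (-s)) := by
      intro y hy
      refine le_trans (hp_bound t x y ht0 hx hy) ?_
      refine mul_le_mul_right ?_ _
      refine le_trans (my_min_le_rpow hθ0 hθ1) ?_
      rw [← ENNReal.rpow_mul, ENNReal.mul_rpow_of_nonneg _ _ hθ0.le, ← ENNReal.rpow_mul,
        ← mul_assoc, ← ENNReal.rpow_add _ _ htne0 htnetop]
      apply le_of_eq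
      congr 1
      · congr 1
        rw [hβ']; ring
      · congr 1
        rw [hs, hA']; ring
    have hq' : (0:ℝ) ≤ q := hq0.le
    set C : ℝ≥0∞ := ENNReal.ofReal chat ^ q * ENNReal.ofReal t ^ (β * q) with hC
    have hCne : C ≠ ⊤ := by
      rw [hC]
      refine ENNReal.mul_ne_top (ENNReal.rpow_ne_top_of_nonneg hq' ENNReal.ofReal_ne_top) ?_
      intro h
      rcases ENNReal.rpow_eq_top_iff.1 h with ⟨h', _⟩ | ⟨h', _⟩
      · exact htne0 h'
      · exact htnetop h'
    have hint : (∫⁻ y in D, ENNReal.ofReal (p t x y) ^ q) ≤ C * M := by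
      calc ∫⁻ y in D, ENNReal.ofReal (p t x y) ^ q
          ≤ ∫⁻ y in D, C * ((‖x - y‖₊ : ℝ≥0∞)) ^ (-r) := by
            apply setLIntegral_mono' hD_meas
            intro y hy
            refine le_trans (ENNReal.rpow_le_rpow (hpt y hy) hq') ?_
            rw [ENNReal.mul_rpow_of_nonneg _ _ hq', ENNReal.mul_rpow_of_nonneg _ _ hq',
              ← ENNReal.rpow_mul, ← ENNReal.rpow_mul, hC]
            apply le_of_eq
            rw [show (-s)*q = -r by rw [hr]; ring, mul_assoc]
        _ = C * ∫⁻ y in D, ((‖x - y‖₊ : ℝ≥0∞)) ^ (-r) := lintegral_const_mul' _ _ hCne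
        _ ≤ C * M := by
            refine mul_le_mul_right ?_ _
            rw [← hchange x]
            exact lintegral_mono_set (hsub x hx)
    refine le_trans (ENNReal.rpow_le_rpow hint (by positivity)) ?_
    rw [hC, ENNReal.mul_rpow_of_nonneg _ _ (by positivity),
      ENNReal.mul_rpow_of_nonneg _ _ (by positivity),
      ← ENNReal.rpow_mul, ← ENNReal.rpow_mul]
    have hqq : q * (1/q) = 1 := by field_simp
    have hbq : β * q * (1/q) = β := by field_simp
    rw [hqq, hbq, ENNReal.rpow_one]
    apply le_of_eq
    ring
  have hIβ : (∫⁻ t in Set.Ioo (0:ℝ) T, ENNReal.ofReal t ^ β) < ⊤ := by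
    have hcongr : ∀ t ∈ Set.Ioo (0:ℝ) T,
        ENNReal.ofReal t ^ β = ENNReal.ofReal (t ^ β) := fun t ht =>
      ENNReal.ofReal_rpow_of_pos ht.1
    rw [setLIntegral_congr_fun measurableSet_Ioo hcongr]
    have hInt : IntegrableOn (fun t : ℝ => t ^ β) (Set.Ioo 0 T) :=
      (intervalIntegral.integrableOn_Ioo_rpow_iff hT).2 hβ
    exact hInt.lintegral_lt_top
  set B : ℝ≥0∞ := ENNReal.ofReal chat * M ^ (1/q) with hB
  have hBne : B ≠ ⊤ := by
    rw [hB]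
    exact ENNReal.mul_ne_top ENNReal.ofReal_ne_top
      (ENNReal.rpow_ne_top_of_nonneg (by positivity) hM.ne)
  have hfinal : ∀ x ∈ D,
      (∫⁻ t in Set.Ioo (0:ℝ) T, (∫⁻ y in D, ENNReal.ofReal (p t x y) ^ q) ^ (1/q))
        ≤ B * ∫⁻ t in Set.Ioo (0:ℝ) T, ENNReal.ofReal t ^ β := by
    intro x hx
    calc (∫⁻ t in Set.Ioo (0:ℝ) T, (∫⁻ y in D, ENNReal.ofReal (p t x y) ^ q) ^ (1/q))
        ≤ ∫⁻ t in Set.Ioo (0:ℝ) T, B * ENNReal.ofReal t ^ β :=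
          setLIntegral_mono' measurableSet_Ioo (claim1 x hx)
      _ = B * ∫⁻ t in Set.Ioo (0:ℝ) T, ENNReal.ofReal t ^ β :=
          lintegral_const_mul' _ _ hBne
  exact lt_of_le_of_lt (iSup₂_le hfinal)
    (ENNReal.mul_lt_top (lt_of_le_of_ne le_top hBne) hIβ)
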